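/- Let F be a free group with Fox derivatives ∂_i and iterated augmented derivatives ε_I = ε ∘ ∂_{i₁} ∘ … ∘ ∂_{i_k} for I = (i₁,…,i_k). If w lies in the q-th lower central series term F_q and |I| < q, then ε_I(w) = 0. -/

import Mathlib

/-! Fox free differential calculus on the free group `F(n)`, with values in the
integral group ring `ℤF`. -/

/-- The integral group ring of the free group on `n` generators. -/
abbrev FreeGroupRing (n : ℕ) := MonoidAlgebra ℤ (FreeGroup (Fin n))

/-- Left multiplication by a group element, as an additive automorphism of `ℤF`. -/
noncomputable def lmulAut {n : ℕ} (g : FreeGroup (Fin n)) :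
    FreeGroupRing n ≃+ FreeGroupRing n where
  toFun a := MonoidAlgebra.of ℤ (FreeGroup (Fin n)) g * a
  invFun a := MonoidAlgebra.of ℤ (FreeGroup (Fin n)) g⁻¹ * a
  left_inv a := by
    show MonoidAlgebra.of ℤ (FreeGroup (Fin n)) g⁻¹ *
        (MonoidAlgebra.of ℤ (FreeGroup (Fin n)) g * a) = a
    rw [← mul_assoc, ← map_mul, inv_mul_cancel, map_one, one_mul]
  right_inv a := by
    show MonoidAlgebra.of ℤ (FreeGroup (Fin n)) g *
        (MonoidAlgebra.of ℤ (FreeGroup (Fin n)) g⁻¹ * a) = a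
    rw [← mul_assoc, ← map_mul, mul_inv_cancel, map_one, one_mul]
  map_add' a b := mul_add _ a b

/-- The action of `F(n)` on `ℤF` by left multiplication, as a homomorphism to the
multiplicative automorphisms of the (multiplicatively written) additive group `ℤF`. -/
noncomputable def foxAction (n : ℕ) :
    FreeGroup (Fin n) →* MulAut (Multiplicative (FreeGroupRing n)) where
  toFun g := AddEquiv.toMultiplicative (lmulAut g)
  map_one' := by
    ext a : 1
    show Multiplicative.ofAdd (MonoidAlgebra.single 1 1 * Multiplicative.toAdd a) = a
    simp [MonoidAlgebra.one_def.symm]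
  map_mul' g h := by
    ext a : 1
    show MonoidAlgebra.single (g * h) 1 * Multiplicative.toAdd a =
      MonoidAlgebra.single g 1 * (MonoidAlgebra.single h 1 * Multiplicative.toAdd a)
    rw [← mul_assoc, MonoidAlgebra.single_mul_single, mul_one]

/-- The homomorphism `F(n) → ℤF ⋊ F(n)` whose first component computes the `i`-th
Fox derivative: it sends `x_j` to `(δ_{ij}, x_j)`. -/
noncomputable def foxHom {n : ℕ} (i : Fin n) :
    FreeGroup (Fin n) →* SemidirectProduct (Multiplicative (FreeGroupRing n))
      (FreeGroup (Fin n)) (foxAction n) :=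
  FreeGroup.lift fun j =>
    ⟨Multiplicative.ofAdd (if j = i then (1 : FreeGroupRing n) else 0), FreeGroup.of j⟩

/-- The `i`-th Fox derivative `∂_i : F(n) → ℤF`, characterized by `∂_i(x_j) = δ_{ij}`
and `∂_i(uv) = ∂_i(u) + u·∂_i(v)`. -/
noncomputable def foxDeriv {n : ℕ} (i : Fin n) (w : FreeGroup (Fin n)) : FreeGroupRing n :=
  Multiplicative.toAdd (foxHom i w).left

/-- The `ℤ`-linear extension of the Fox derivative to the group ring `ℤF`. -/
noncomputable def foxDerivLin {n : ℕ} (i : Fin n) : FreeGroupRing n →ₗ[ℤ] FreeGroupRing n :=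
  Finsupp.lift (FreeGroupRing n) ℤ (FreeGroup (Fin n)) (foxDeriv i) ∘ₗ
    (MonoidAlgebra.coeffLinearEquiv ℤ).toLinearMap

/-- The augmentation map `ε : ℤF → ℤ`, sending every group element to `1`. -/
noncomputable def augmentation (n : ℕ) : FreeGroupRing n →ₐ[ℤ] ℤ :=
  MonoidAlgebra.lift ℤ ℤ (FreeGroup (Fin n)) 1

/-- Iterated Fox derivatives `∂_{i₁} ∘ ⋯ ∘ ∂_{i_k}` (applied right-to-left). -/
noncomputable def foxIter {n : ℕ} : List (Fin n) → FreeGroupRing n → FreeGroupRing n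
  | [], a => a
  | i :: I, a => foxDerivLin i (foxIter I a)

/-- The composite `ε_I = ε ∘ ∂_{i₁} ∘ ⋯ ∘ ∂_{i_k}` applied to a group element. -/
noncomputable def epsFox {n : ℕ} (I : List (Fin n)) (w : FreeGroup (Fin n)) : ℤ :=
  augmentation n (foxIter I (MonoidAlgebra.of ℤ (FreeGroup (Fin n)) w))


section Aux
variable {n : ℕ}

/-- Shorthand for the canonical inclusion `F(n) → ℤF`. -/
noncomputable abbrev ofF (w : FreeGroup (Fin n)) : FreeGroupRing n :=
  MonoidAlgebra.of ℤ (FreeGroup (Fin n)) w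

lemma ofF_mul (u v : FreeGroup (Fin n)) : ofF (u * v) = ofF u * ofF v :=
  map_mul (MonoidAlgebra.of ℤ (FreeGroup (Fin n))) u v

lemma ofF_one : ofF (1 : FreeGroup (Fin n)) = 1 :=
  map_one (MonoidAlgebra.of ℤ (FreeGroup (Fin n)))

lemma foxHom_right (i : Fin n) (w : FreeGroup (Fin n)) : (foxHom i w).right = w := by
  have : (SemidirectProduct.rightHom.comp (foxHom i) : FreeGroup (Fin n) →* FreeGroup (Fin n))
      = MonoidHom.id _ := by
    apply FreeGroup.ext_hom
    intro j
    simp [foxHom]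
  exact DFunLike.congr_fun this w

lemma foxDeriv_mul (i : Fin n) (u v : FreeGroup (Fin n)) :
    foxDeriv i (u * v) = foxDeriv i u + ofF u * foxDeriv i v := by
  unfold foxDeriv
  rw [map_mul]
  show Multiplicative.toAdd ((foxHom i u).left * (foxAction n (foxHom i u).right) ((foxHom i v).left)) = _
  rw [foxHom_right]
  rfl

lemma foxDeriv_one (i : Fin n) : foxDeriv i (1 : FreeGroup (Fin n)) = 0 := by
  unfold foxDeriv
  rw [map_one]
  rfl

lemma foxDerivLin_of (i : Fin n) (u : FreeGroup (Fin n)) :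
    foxDerivLin i (ofF u) = foxDeriv i u := by
  show (Finsupp.lift (FreeGroupRing n) ℤ (FreeGroup (Fin n)) (foxDeriv i))
      (Finsupp.single u 1) = foxDeriv i u
  rw [Finsupp.lift_apply, Finsupp.sum_single_index (by simp), one_smul]

lemma augmentation_of (v : FreeGroup (Fin n)) : augmentation n (ofF v) = 1 := by
  simp [augmentation]

/-- The product rule for the linearized Fox derivative. -/
lemma foxDerivLin_mul (i : Fin n) (a b : FreeGroupRing n) :
    foxDerivLin i (a * b) = augmentation n b • foxDerivLin i a + a * foxDerivLin i b := by
  induction a using MonoidAlgebra.induction_on with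
  | of u =>
    induction b using MonoidAlgebra.induction_on with
    | of v =>
      rw [show (MonoidAlgebra.of ℤ (FreeGroup (Fin n)) u) * (MonoidAlgebra.of ℤ (FreeGroup (Fin n)) v) = ofF (u*v) from (ofF_mul u v).symm]
      rw [foxDerivLin_of, foxDerivLin_of, foxDerivLin_of, augmentation_of, foxDeriv_mul]
      simp
    | add b₁ b₂ h₁ h₂ =>
      simp only [mul_add, map_add, h₁, h₂, add_smul]
      abel
    | smul r b hb =>
      simp only [mul_smul_comm, map_smul, hb, smul_add, smul_smul, smul_comm r]
      simp [mul_smul_comm]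
      rw [Int.cast_comm]
  | add a₁ a₂ h₁ h₂ =>
    rw [add_mul, map_add, h₁, h₂, map_add, smul_add, add_mul]
    abel
  | smul r a ha =>
    rw [smul_mul_assoc, map_smul, ha, map_smul, smul_add, smul_mul_assoc, smul_comm r]

/-- The augmentation ideal, as a `ℤ`-submodule of `ℤF`. -/
noncomputable def aug (n : ℕ) : Submodule ℤ (FreeGroupRing n) :=
  LinearMap.ker (augmentation n).toLinearMap

lemma mem_aug {a : FreeGroupRing n} : a ∈ aug n ↔ augmentation n a = 0 := Iff.rfl

lemma aug_mul_top : aug n * ⊤ ≤ aug n := by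
  rw [Submodule.mul_le]
  intro x hx y _
  rw [mem_aug] at hx ⊢
  rw [map_mul, hx, zero_mul]

lemma top_mul_aug : (⊤ : Submodule ℤ (FreeGroupRing n)) * aug n ≤ aug n := by
  rw [Submodule.mul_le]
  intro x _ y hy
  rw [mem_aug] at hy ⊢
  rw [map_mul, hy, mul_zero]

lemma aug_pow_mul_top (m : ℕ) : aug n ^ (m + 1) * ⊤ ≤ aug n ^ (m + 1) := by
  rw [pow_succ, mul_assoc]
  exact mul_le_mul_right (aug_mul_top) _

lemma top_mul_aug_pow (m : ℕ) : (⊤ : Submodule ℤ (FreeGroupRing n)) * aug n ^ (m + 1) ≤ aug n ^ (m + 1) := by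
  rw [pow_succ', ← mul_assoc]
  exact mul_le_mul_left (top_mul_aug) _

lemma aug_pow_le_aug (m : ℕ) : aug n ^ (m + 1) ≤ aug n := by
  induction m with
  | zero => rw [pow_one]
  | succ m ih =>
    calc aug n ^ (m + 2) = aug n ^ (m + 1) * aug n := pow_succ _ _
    _ ≤ aug n * ⊤ := mul_le_mul' ih le_top
    _ ≤ aug n := aug_mul_top

lemma foxDerivLin_mem_aug_pow (i : Fin n) (m : ℕ) (a : FreeGroupRing n)
    (ha : a ∈ aug n ^ (m + 2)) : foxDerivLin i a ∈ aug n ^ (m + 1) := by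
  rw [pow_succ] at ha
  refine Submodule.mul_induction_on ha ?_ ?_
  · intro x hx y hy
    rw [foxDerivLin_mul, mem_aug.mp hy, zero_smul, zero_add]
    exact aug_pow_mul_top m (Submodule.mul_mem_mul hx Submodule.mem_top)
  · intro x y hx hy
    rw [map_add]
    exact add_mem hx hy

lemma foxIter_mem_aug_pow (I : List (Fin n)) (m : ℕ) (hlen : I.length < m)
    (a : FreeGroupRing n) (ha : a ∈ aug n ^ m) :
    foxIter I a ∈ aug n ^ (m - I.length) := by
  induction I with
  | nil => simpa [foxIter] using ha
  | cons i I ih =>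
    have h1 : I.length < m := Nat.lt_of_succ_lt (by simpa using hlen)
    obtain ⟨t, ht1, ht2⟩ : ∃ t, m - I.length = t + 2 ∧ m - (i :: I).length = t + 1 := by
      refine ⟨m - I.length - 2, ?_, ?_⟩ <;> simp at hlen ⊢ <;> omega
    have := ih h1
    rw [ht1] at this
    show foxDerivLin i (foxIter I a) ∈ _
    rw [ht2]
    exact foxDerivLin_mem_aug_pow i t _ this

/-- The "dimension subgroup" `D_m = {w | w - 1 ∈ Δ^(m+1)}`. -/
noncomputable def dimSubgroup (n m : ℕ) : Subgroup (FreeGroup (Fin n)) where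
  carrier := {w | ofF w - 1 ∈ aug n ^ (m + 1)}
  one_mem' := by
    show ofF (1 : FreeGroup (Fin n)) - 1 ∈ aug n ^ (m + 1)
    rw [ofF_one, sub_self]
    exact zero_mem _
  mul_mem' := by
    intro u v hu hv
    show ofF (u * v) - 1 ∈ aug n ^ (m + 1)
    have key : ofF (u * v) - 1 = (ofF u - 1) * (ofF v - 1) + (ofF u - 1) + (ofF v - 1) := by
      rw [ofF_mul]; noncomm_ring
    rw [key]
    refine add_mem (add_mem ?_ hu) hv
    exact aug_pow_mul_top m (Submodule.mul_mem_mul hu Submodule.mem_top)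
  inv_mem' := by
    intro u hu
    show ofF u⁻¹ - 1 ∈ aug n ^ (m + 1)
    have key : ofF u⁻¹ - 1 = -(ofF u⁻¹ * (ofF u - 1)) := by
      rw [mul_sub, ← ofF_mul, inv_mul_cancel, ofF_one, mul_one, neg_sub]
    rw [key]
    exact neg_mem (top_mul_aug_pow m (Submodule.mul_mem_mul Submodule.mem_top hu))

lemma mem_dimSubgroup {m : ℕ} {w : FreeGroup (Fin n)} :
    w ∈ dimSubgroup n m ↔ ofF w - 1 ∈ aug n ^ (m + 1) := Iff.rfl

open scoped commutatorElement in
lemma lowerCentralSeries_le_dimSubgroup (m : ℕ) :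
    (⊤ : Subgroup (FreeGroup (Fin n))).lowerCentralSeries m ≤ dimSubgroup n m := by
  induction m with
  | zero =>
    intro w _
    rw [mem_dimSubgroup, pow_one, mem_aug, map_sub, map_one, augmentation_of, sub_self]

  | succ m ih =>
    show ⁅(⊤ : Subgroup (FreeGroup (Fin n))).lowerCentralSeries m, (⊤ : Subgroup (FreeGroup (Fin n)))⁆ ≤ _
    rw [Subgroup.commutator_le]
    intro g hg h _
    rw [mem_dimSubgroup]
    have hg' : ofF g - 1 ∈ aug n ^ (m + 1) := ih hg
    have hh' : ofF h - 1 ∈ aug n := by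
      rw [mem_aug, map_sub, map_one, augmentation_of, sub_self]
    set x := ofF g
    set y := ofF h
    set x' := ofF g⁻¹
    set y' := ofF h⁻¹
    have hx : x * x' = 1 := by rw [← ofF_mul, mul_inv_cancel, ofF_one]
    have hy : y * y' = 1 := by rw [← ofF_mul, mul_inv_cancel, ofF_one]
    have key : ofF ⁅g, h⁆ - 1 = ((x - 1) * (y - 1) - (y - 1) * (x - 1)) * (x' * y') := by
      have hof : ofF ⁅g, h⁆ = x * y * x' * y' := by
        show ofF (g * h * g⁻¹ * h⁻¹) = x * y * x' * y'
        rw [ofF_mul, ofF_mul, ofF_mul]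
      have expand : ((x - 1) * (y - 1) - (y - 1) * (x - 1)) * (x' * y')
          = x * y * x' * y' - y * (x * x') * y' := by noncomm_ring
      rw [hof, expand, hx, mul_one, hy]
    rw [key]
    have h1 : (x - 1) * (y - 1) ∈ aug n ^ (m + 2) := by
      rw [pow_succ]
      exact Submodule.mul_mem_mul hg' hh'
    have h2 : (y - 1) * (x - 1) ∈ aug n ^ (m + 2) := by
      rw [pow_succ']
      exact Submodule.mul_mem_mul hh' hg'
    exact aug_pow_mul_top (m + 1) (Submodule.mul_mem_mul (sub_mem h1 h2) Submodule.mem_top)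

lemma foxIter_add (I : List (Fin n)) (a b : FreeGroupRing n) :
    foxIter I (a + b) = foxIter I a + foxIter I b := by
  induction I with
  | nil => rfl
  | cons i I ih => show foxDerivLin i _ = _; rw [ih, map_add]; rfl

lemma foxIter_one (I : List (Fin n)) (hne : I ≠ []) :
    foxIter I (1 : FreeGroupRing n) = 0 := by
  induction I with
  | nil => exact absurd rfl hne
  | cons i I ih =>
    cases I with
    | nil =>
      show foxDerivLin i (1 : FreeGroupRing n) = 0
      rw [show (1 : FreeGroupRing n) = ofF 1 from (map_one _).symm, foxDerivLin_of, foxDeriv_one]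
    | cons j J =>
      show foxDerivLin i (foxIter (j :: J) 1) = 0
      rw [ih (by simp), map_zero]

end Aux

/-- If `w` lies in the `q`-th lower central series term `F_q` of the free group
(`F₁ = F`, so `F_q = lowerCentralSeries F (q-1)`) and `I` is a (nonempty) multi-index
with `|I| < q`, then `ε_I(w) = 0`. -/
theorem epsFox_eq_zero_of_mem_lowerCentralSeries {n : ℕ} (q : ℕ)
    (I : List (Fin n)) (hne : I ≠ []) (hlen : I.length < q)
    (w : FreeGroup (Fin n))
    (hw : w ∈ (⊤ : Subgroup (FreeGroup (Fin n))).lowerCentralSeries (q - 1)) :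
    epsFox I w = 0 := by
  have hq2 : 2 ≤ q := by
    have : 1 ≤ I.length := Nat.one_le_iff_ne_zero.mpr (fun h => hne (List.eq_nil_of_length_eq_zero h))
    omega
  have hw' : ofF w - 1 ∈ aug n ^ q := by
    have := lowerCentralSeries_le_dimSubgroup (q - 1) hw
    rw [mem_dimSubgroup, show q - 1 + 1 = q by omega] at this
    exact this
  have hiter : foxIter I (ofF w - 1) ∈ aug n ^ (q - I.length) :=
    foxIter_mem_aug_pow I q hlen _ hw'
  have heps : augmentation n (foxIter I (ofF w - 1)) = 0 := by
    have hle : aug n ^ (q - I.length) ≤ aug n := by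
      obtain ⟨t, ht⟩ : ∃ t, q - I.length = t + 1 := ⟨q - I.length - 1, by omega⟩
      rw [ht]; exact aug_pow_le_aug t
    exact mem_aug.mp (hle hiter)
  have hsplit : foxIter I (MonoidAlgebra.of ℤ (FreeGroup (Fin n)) w)
      = foxIter I (ofF w - 1) + foxIter I 1 := by
    rw [← foxIter_add, sub_add_cancel]
  rw [epsFox, hsplit, foxIter_one I hne, add_zero, heps]
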